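/- Let A be a local Artinian k-algebra with maximal ideal M, residue field k, and dim_k(M²/M³) = 2, with char(k) ≠ 2. If a₁,…,aₙ generate M and a₁a₂ ∈ M² \ M³, then for some choice of linear combinations b₁, b₂ of the aᵢ one has M² = (b₁², b₂²) + M³ with b₁², b₂² linearly independent modulo M³. -/

import Mathlib

set_option maxHeartbeats 1000000

open IsLocalRing Submodule Module

/-- `dim_k (M^i / M^{i+1})`. -/
noncomputable def hilbFn (k : Type*) {A : Type*} [Field k] [CommRing A] [Algebra k A]
    (M : Ideal A) (i : ℕ) : ℕ :=
  Module.finrank k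
    ((Submodule.restrictScalars k (M ^ i)) ⧸
      (Submodule.comap (Submodule.restrictScalars k (M ^ i)).subtype
        (Submodule.restrictScalars k (M ^ (i + 1)))))

theorem stmt5 (k A : Type*) [Field k] [IsAlgClosed k] (hchar : (2 : k) ≠ 0)
    [CommRing A] [Algebra k A] [IsLocalRing A] [IsArtinianRing A]
    (hres : Function.Bijective (algebraMap k (IsLocalRing.ResidueField A)))
    (hH2 : hilbFn k (IsLocalRing.maximalIdeal A) 2 = 2)
    (n : ℕ) (hn : 2 ≤ n) (a : Fin n → A)
    (hgen : Ideal.span (Set.range a) = IsLocalRing.maximalIdeal A)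
    (h12 : a ⟨0, by omega⟩ * a ⟨1, by omega⟩ ∈ IsLocalRing.maximalIdeal A ^ 2)
    (h12' : a ⟨0, by omega⟩ * a ⟨1, by omega⟩ ∉ IsLocalRing.maximalIdeal A ^ 3) :
    ∃ c e : Fin n → k,
      (IsLocalRing.maximalIdeal A ^ 2 =
        Ideal.span {(∑ i, c i • a i) ^ 2, (∑ i, e i • a i) ^ 2} ⊔
          IsLocalRing.maximalIdeal A ^ 3) ∧
      LinearIndependent k
        ![Ideal.Quotient.mk (IsLocalRing.maximalIdeal A ^ 3) ((∑ i, c i • a i) ^ 2),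
          Ideal.Quotient.mk (IsLocalRing.maximalIdeal A ^ 3) ((∑ i, e i • a i) ^ 2)] := by
  classical
  set M : Ideal A := IsLocalRing.maximalIdeal A with hMdef
  set mk3 : A →+* A ⧸ M ^ 3 := Ideal.Quotient.mk (M ^ 3) with hmk3
  -- every element of A decomposes as scalar + maximal ideal element
  have hdecomp : ∀ r : A, ∃ c : k, r - algebraMap k A c ∈ M := by
    intro r
    obtain ⟨c, hc⟩ := hres.2 (IsLocalRing.residue A r)
    refine ⟨c, ?_⟩
    have h2 : Ideal.Quotient.mk M (r - algebraMap k A c) = 0 := by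
      have e1 : Ideal.Quotient.mk M r = IsLocalRing.residue A r := rfl
      have e2 : Ideal.Quotient.mk M (algebraMap k A c) = algebraMap k (ResidueField A) c := rfl
      rw [map_sub, e1, e2, hc]; exact sub_self _
    rwa [Ideal.Quotient.eq_zero_iff_mem] at h2
  have hamem : ∀ i, a i ∈ M := fun i => by
    rw [← hgen]; exact Ideal.subset_span ⟨i, rfl⟩
  have hmem : ∀ c : Fin n → k, (∑ i, c i • a i) ∈ M := by
    intro c
    exact Submodule.sum_mem _ fun i _ => Submodule.smul_of_tower_mem _ _ (hamem i)
  have hsq : ∀ c : Fin n → k, (∑ i, c i • a i) ^ 2 ∈ M ^ 2 := fun c => by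
    rw [sq, sq]; exact Ideal.mul_mem_mul (hmem c) (hmem c)
  -- the set of (images of) squares of linear combinations
  set q : (Fin n → k) → A := fun c => (∑ i, c i • a i) with hq
  set S : Set (A ⧸ M ^ 3) := Set.range (fun c => mk3 (q c ^ 2)) with hSdef
  set W : Submodule k (A ⧸ M ^ 3) := Submodule.span k S with hWdef
  have hmklin : ∀ (c : k) (x : A), mk3 (c • x) = c • mk3 x := by
    intro c x
    rw [Algebra.smul_def, Algebra.smul_def, map_mul]
    congr 1
  -- polarization: products of generators lie in W
  have hpol : ∀ i j, mk3 (a i * a j) ∈ W := by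
    intro i j
    have hsingle : ∀ i : Fin n, q (Pi.single i (1 : k)) = a i := by
      intro i
      simp [hq, Pi.single_apply, ite_smul]
    have hqadd : ∀ c d : Fin n → k, q (c + d) = q c + q d := by
      intro c d
      simp [hq, add_smul, Finset.sum_add_distrib]
    have key : a i * a j =
        (2⁻¹ : k) • (q (Pi.single i 1 + Pi.single j 1) ^ 2 - q (Pi.single i 1) ^ 2
          - q (Pi.single j 1) ^ 2) := by
      rw [hqadd, hsingle, hsingle]
      have h2 : (q (Pi.single i 1) + a j) ^ 2 - q (Pi.single i 1) ^ 2 - a j ^ 2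
          = (2 : k) • (a i * a j) := by
        rw [hsingle, Algebra.smul_def]
        have : (algebraMap k A) (2 : k) = 2 := by
          rw [map_ofNat]
        rw [this]; ring
      rw [hsingle] at h2
      rw [h2, smul_smul, inv_mul_cancel₀ hchar, one_smul]
    rw [key, hmklin, map_sub, map_sub]
    refine Submodule.smul_mem _ _ (Submodule.sub_mem _ (Submodule.sub_mem _ ?_ ?_) ?_) <;>
      exact Submodule.subset_span ⟨_, rfl⟩
  -- every element of M^2 maps into W
  have hQW : ∀ x ∈ (M ^ 2 : Ideal A), mk3 x ∈ W := by
    have hM2 : (M ^ 2 : Ideal A) = Ideal.span (⋃ s ∈ Set.range a, ⋃ t ∈ Set.range a, {s * t}) := by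
      rw [← hgen, sq, Ideal.span_mul_span]; congr 1; ext z; simp [Set.mem_mul, eq_comm]
    intro x hx
    rw [hM2] at hx
    have main : ∀ x ∈ Ideal.span (⋃ s ∈ Set.range a, ⋃ t ∈ Set.range a, {s * t}),
        mk3 x ∈ W ∧ x ∈ (M ^ 2 : Ideal A) := by
      intro x hx
      refine Submodule.span_induction ?_ ?_ ?_ ?_ hx
      · rintro y hy
        simp only [Set.mem_iUnion, Set.mem_range] at hy
        obtain ⟨s, ⟨i, rfl⟩, t, ⟨j, rfl⟩, hy⟩ := hy
        rcases Set.mem_singleton_iff.mp hy with rfl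
        exact ⟨hpol i j, by rw [sq]; exact Ideal.mul_mem_mul (hamem i) (hamem j)⟩
      · exact ⟨by simp, Submodule.zero_mem _⟩
      · rintro y z _ _ ⟨hy1, hy2⟩ ⟨hz1, hz2⟩
        exact ⟨by rw [map_add]; exact Submodule.add_mem _ hy1 hz1, Submodule.add_mem _ hy2 hz2⟩
      · rintro r y _ ⟨hy1, hy2⟩
        obtain ⟨c, hm⟩ := hdecomp r
        constructor
        · have hry : r • y = c • y + (r - algebraMap k A c) * y := by
            rw [smul_eq_mul, Algebra.smul_def]; ring
          have h3 : (r - algebraMap k A c) * y ∈ (M ^ 3 : Ideal A) := by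
            have heq : M * M ^ 2 = M ^ 3 := by
              calc M * M ^ 2 = M ^ 2 * M := mul_comm _ _
                _ = M ^ 3 := (pow_succ M 2).symm
            rw [← heq]
            exact Ideal.mul_mem_mul hm hy2
          rw [hry, map_add, hmklin]
          have : mk3 ((r - algebraMap k A c) * y) = 0 := by
            rwa [hmk3, Ideal.Quotient.eq_zero_iff_mem]
          rw [this, add_zero]
          exact Submodule.smul_mem _ _ hy1
        · exact Submodule.smul_mem _ _ hy2
    exact (main x hx).1
  -- W equals the image of M^2, which has finrank 2
  set g : A →ₗ[k] A ⧸ M ^ 3 := (Ideal.Quotient.mkₐ k (M ^ 3)).toLinearMap with hg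
  set f : (Submodule.restrictScalars k (M ^ 2)) →ₗ[k] A ⧸ M ^ 3 :=
    g.comp (Submodule.restrictScalars k (M ^ 2)).subtype with hf
  have hfapply : ∀ x : (Submodule.restrictScalars k (M ^ 2)), f x = mk3 x.1 := fun x => rfl
  have hker : LinearMap.ker f = Submodule.comap (Submodule.restrictScalars k (M ^ 2)).subtype
      (Submodule.restrictScalars k (M ^ 3)) := by
    ext x
    simp only [LinearMap.mem_ker, hfapply, Submodule.mem_comap, Submodule.subtype_apply,
      Submodule.restrictScalars_mem, hmk3]
    exact Ideal.Quotient.eq_zero_iff_mem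
  have hrange : LinearMap.range f = W := by
    apply le_antisymm
    · rintro _ ⟨x, rfl⟩
      exact hQW x.1 x.2
    · rw [hWdef]
      rw [Submodule.span_le]
      rintro _ ⟨c, rfl⟩
      exact ⟨⟨q c ^ 2, hsq c⟩, rfl⟩
  have hfinW : Module.finrank k W = 2 := by
    have e1 := LinearMap.quotKerEquivRange f
    rw [hker, hrange] at e1
    have := e1.finrank_eq
    rw [← this]
    exact hH2
  have hfd : FiniteDimensional k W := by
    refine FiniteDimensional.of_finrank_pos ?_
    rw [hfinW]; norm_num
  -- find a nonzero square
  have hex1 : ∃ c, mk3 (q c ^ 2) ≠ 0 := by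
    by_contra h
    push_neg at h
    have : W ≤ ⊥ := by
      rw [hWdef, Submodule.span_le]
      rintro _ ⟨c, rfl⟩
      simp [h c]
    have : W = ⊥ := le_bot_iff.mp this
    rw [this] at hfinW
    simp at hfinW
  obtain ⟨c, hc0⟩ := hex1
  set x : A ⧸ M ^ 3 := mk3 (q c ^ 2) with hx
  -- find a second square independent from the first
  have hex2 : ∃ e, mk3 (q e ^ 2) ∉ Submodule.span k {x} := by
    by_contra h
    push_neg at h
    have hWle : W ≤ Submodule.span k {x} := by
      rw [hWdef, Submodule.span_le]
      rintro _ ⟨e, rfl⟩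
      exact h e
    have h1 : Module.finrank k (Submodule.span k {x}) = 1 := finrank_span_singleton hc0
    have h2 : Module.finrank k W ≤ Module.finrank k (Submodule.span k {x}) :=
      Submodule.finrank_mono hWle
    rw [hfinW, h1] at h2
    omega
  obtain ⟨e, he⟩ := hex2
  set y : A ⧸ M ^ 3 := mk3 (q e ^ 2) with hy
  -- linear independence
  have hli : LinearIndependent k ![x, y] := by
    rw [linearIndependent_fin2]
    constructor
    · simp only [Matrix.cons_val_one, Matrix.head_cons, Matrix.cons_val_zero]
      intro h0
      exact he (by rw [← hy] at *; rw [h0]; exact Submodule.zero_mem _)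
    · intro t ht
      simp only [Matrix.cons_val_one, Matrix.head_cons, Matrix.cons_val_zero] at ht
      rcases eq_or_ne t 0 with rfl | htne
      · rw [zero_smul] at ht; exact hc0 ht.symm
      · apply he
        have : y = t⁻¹ • x := by
          rw [← ht, smul_smul, inv_mul_cancel₀ htne, one_smul]
        rw [this]
        exact Submodule.smul_mem _ _ (Submodule.mem_span_singleton_self x)
  -- span {x, y} = W
  have hspan : Submodule.span k {x, y} = W := by
    refine Submodule.eq_of_le_of_finrank_le ?_ ?_
    · rw [Submodule.span_le]
      rintro z hz
      rcases hz with rfl | hz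
      · exact Submodule.subset_span ⟨c, rfl⟩
      · rcases Set.mem_singleton_iff.mp hz with rfl
        exact Submodule.subset_span ⟨e, rfl⟩
    · have hr : Set.range ![x, y] = {x, y} := by
        simp only [Matrix.range_cons, Matrix.range_empty, Set.union_empty,
          Set.union_singleton]
        exact Set.pair_comm y x
      rw [hfinW]
      have := finrank_span_eq_card hli
      rw [hr] at this
      rw [this]
      simp
  refine ⟨c, e, le_antisymm ?_ ?_, hli⟩
  swap
  · -- span {b1^2, b2^2} ⊔ M^3 ≤ M^2
    refine sup_le ?_ (Ideal.pow_le_pow_right (by norm_num))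
    rw [Ideal.span_le]
    rintro z hz
    rcases hz with rfl | hz
    · exact hsq c
    · rcases Set.mem_singleton_iff.mp hz with rfl
      exact hsq e
  · -- M^2 ≤ span {b1^2, b2^2} ⊔ M^3
    intro m hm
    have hmW : mk3 m ∈ Submodule.span k {x, y} := by rw [hspan]; exact hQW m hm
    obtain ⟨α, β, hab⟩ := Submodule.mem_span_pair.mp hmW
    have hdiff : m - (α • (q c ^ 2) + β • (q e ^ 2)) ∈ (M ^ 3 : Ideal A) := by
      rw [← Ideal.Quotient.eq (I := M ^ 3)]
      show mk3 _ = mk3 _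
      rw [map_add, hmklin, hmklin, ← hx, ← hy, hab]
    rw [Submodule.mem_sup]
    refine ⟨α • (q c ^ 2) + β • (q e ^ 2), ?_, m - (α • (q c ^ 2) + β • (q e ^ 2)), hdiff, by ring⟩
    refine Submodule.add_mem _ ?_ ?_
    · rw [Algebra.smul_def]
      exact Ideal.mul_mem_left _ _ (Ideal.subset_span (by left; rfl))
    · rw [Algebra.smul_def]
      exact Ideal.mul_mem_left _ _ (Ideal.subset_span (by right; rfl))
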